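/- The set of patterns {1324, 2314, 3214, 4213} is inversion monotone; that is, for every n ≥ 1 and every k ≥ 0, the number of permutations of length n with exactly k inversions avoiding all of 1324, 2314, 3214 and 4213 is at most the corresponding number for length n+1. -/

import Mathlib

/-- A permutation `π` of length `n` (as a bijection of `Fin n`, position `i` has value `π i`)
contains the pattern `p` of length `m` if some subsequence of `π` is order-isomorphic to `p`. -/
def Contains {n m : ℕ} (π : Equiv.Perm (Fin n)) (p : Equiv.Perm (Fin m)) : Prop :=
  ∃ f : Fin m → Fin n, StrictMono f ∧ ∀ a b : Fin m, π (f a) < π (f b) ↔ p a < p b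

/-- `π` avoids the pattern `p`. -/
def Avoids {n m : ℕ} (π : Equiv.Perm (Fin n)) (p : Equiv.Perm (Fin m)) : Prop :=
  ¬ Contains π p

/-- The number of inversions of `π`: pairs of positions `i < j` with `π i > π j`. -/
noncomputable def invCount {n : ℕ} (π : Equiv.Perm (Fin n)) : ℕ :=
  Nat.card {ij : Fin n × Fin n // ij.1 < ij.2 ∧ π ij.2 < π ij.1}

def p1324 : Equiv.Perm (Fin 4) := ⟨![0,2,1,3], ![0,2,1,3], by decide, by decide⟩
def p2314 : Equiv.Perm (Fin 4) := ⟨![1,2,0,3], ![2,0,1,3], by decide, by decide⟩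
def p3214 : Equiv.Perm (Fin 4) := ⟨![2,1,0,3], ![2,1,0,3], by decide, by decide⟩
def p4213 : Equiv.Perm (Fin 4) := ⟨![3,1,0,2], ![2,1,3,0], by decide, by decide⟩

open Equiv Finset

namespace IMaux

def M {m : ℕ} (π : Equiv.Perm (Fin m)) : Equiv.Perm (Fin m) :=
  Fin.revPerm * π⁻¹ * Fin.revPerm

lemma M_apply {m : ℕ} (π : Equiv.Perm (Fin m)) (i : Fin m) :
    M π i = (π⁻¹ (i.rev)).rev := rfl

lemma M_M {m : ℕ} (π : Equiv.Perm (Fin m)) : M (M π) = π := by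
  ext i
  simp [M, Fin.rev_rev, Equiv.Perm.mul_apply]

lemma contains_M {a b : ℕ} {π : Equiv.Perm (Fin a)} {p : Equiv.Perm (Fin b)}
    (h : Contains π p) : Contains (M π) (M p) := by
  obtain ⟨f, hf, hiff⟩ := h
  refine ⟨fun x => (π (f (p⁻¹ x.rev))).rev, ?_, ?_⟩
  · intro x y hxy
    have h1 : y.rev < x.rev := Fin.rev_lt_rev.mpr hxy
    have h2 : π (f (p⁻¹ y.rev)) < π (f (p⁻¹ x.rev)) :=
      (hiff _ _).mpr (by simpa using h1)
    exact Fin.rev_lt_rev.mpr h2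
  · intro x y
    have e : ∀ z : Fin b, M π ((π (f (p⁻¹ z.rev))).rev) = (f (p⁻¹ z.rev)).rev := by
      intro z; simp [M_apply, Fin.rev_rev]
    rw [e, e, M_apply, M_apply]
    simp only [Fin.rev_lt_rev, hf.lt_iff_lt]

lemma avoids_M_iff {a b : ℕ} (π : Equiv.Perm (Fin a)) (p : Equiv.Perm (Fin b)) :
    Avoids π p ↔ Avoids (M π) (M p) := by
  unfold Avoids
  constructor
  · intro h hc
    exact h (by simpa [M_M] using contains_M hc)
  · intro h hc
    exact h (contains_M hc)

lemma invCount_eq {m : ℕ} (π : Equiv.Perm (Fin m)) :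
    invCount π = (Finset.univ.filter fun ij : Fin m × Fin m =>
      ij.1 < ij.2 ∧ π ij.2 < π ij.1).card := by
  rw [invCount, Nat.card_eq_fintype_card, Fintype.card_subtype]

lemma invCount_M {m : ℕ} (π : Equiv.Perm (Fin m)) : invCount (M π) = invCount π := by
  rw [invCount_eq, invCount_eq]
  refine Finset.card_nbij' (fun ij => (π⁻¹ ij.1.rev, π⁻¹ ij.2.rev))
    (fun ab => ((π ab.1).rev, (π ab.2).rev)) ?_ ?_ ?_ ?_
  · rintro ⟨i, j⟩ hm
    simp only [mem_filter, mem_univ, true_and, M_apply, Fin.rev_lt_rev,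
      Equiv.Perm.inv_def, Equiv.apply_symm_apply, Fin.rev_rev, Finset.mem_coe] at hm ⊢
    exact ⟨hm.2, hm.1⟩
  · rintro ⟨a, b⟩ hm
    simp only [mem_filter, mem_univ, true_and, M_apply, Fin.rev_lt_rev,
      Equiv.Perm.inv_def, Equiv.symm_apply_apply, Fin.rev_rev, Finset.mem_coe] at hm ⊢
    exact ⟨hm.2, hm.1⟩
  · rintro ⟨i, j⟩ _
    simp [Fin.rev_rev]
  · rintro ⟨a, b⟩ _
    simp [Fin.rev_rev]

end IMaux

namespace IMaux

def Cond {m : ℕ} (σ : Equiv.Perm (Fin m)) : Prop :=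
  ∀ k0 k1 k2 k3 : Fin m, k1 < k2 → k2 < k3 →
    σ k1 < σ k3 → σ k3 < σ k2 → σ k2 < σ k0 → False

def q1 : Equiv.Perm (Fin 4) := ⟨![0,2,1,3], ![0,2,1,3], by decide, by decide⟩
def q2 : Equiv.Perm (Fin 4) := ⟨![0,2,3,1], ![0,3,1,2], by decide, by decide⟩
def q3 : Equiv.Perm (Fin 4) := ⟨![0,3,2,1], ![0,3,2,1], by decide, by decide⟩
def q4 : Equiv.Perm (Fin 4) := ⟨![3,0,2,1], ![1,3,2,0], by decide, by decide⟩

lemma M_p1324 : M p1324 = q1 := by ext i; fin_cases i <;> rfl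
lemma M_p2314 : M p2314 = q2 := by ext i; fin_cases i <;> rfl
lemma M_p3214 : M p3214 = q3 := by ext i; fin_cases i <;> rfl
lemma M_p4213 : M p4213 = q4 := by ext i; fin_cases i <;> rfl

end IMaux

set_option maxRecDepth 10000

namespace IMaux

lemma avoids_of_cond {m : ℕ} (σ : Equiv.Perm (Fin m)) (hc : Cond σ) :
    Avoids σ q1 ∧ Avoids σ q2 ∧ Avoids σ q3 ∧ Avoids σ q4 := by
  refine ⟨?_, ?_, ?_, ?_⟩ <;> rintro ⟨f, hf, hiff⟩
  · exact hc (f 3) (f 0) (f 1) (f 2) (hf (by decide)) (hf (by decide))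
      ((hiff 0 2).mpr (by decide)) ((hiff 2 1).mpr (by decide)) ((hiff 1 3).mpr (by decide))
  · exact hc (f 2) (f 0) (f 1) (f 3) (hf (by decide)) (hf (by decide))
      ((hiff 0 3).mpr (by decide)) ((hiff 3 1).mpr (by decide)) ((hiff 1 2).mpr (by decide))
  · exact hc (f 1) (f 0) (f 2) (f 3) (hf (by decide)) (hf (by decide))
      ((hiff 0 3).mpr (by decide)) ((hiff 3 2).mpr (by decide)) ((hiff 2 1).mpr (by decide))
  · exact hc (f 0) (f 1) (f 2) (f 3) (hf (by decide)) (hf (by decide))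
      ((hiff 1 3).mpr (by decide)) ((hiff 3 2).mpr (by decide)) ((hiff 2 0).mpr (by decide))

lemma strictMono4 {m : ℕ} {x0 x1 x2 x3 : Fin m} (h01 : x0 < x1) (h12 : x1 < x2)
    (h23 : x2 < x3) : StrictMono ![x0, x1, x2, x3] := by
  rw [Fin.strictMono_iff_lt_succ]
  intro i
  fin_cases i <;> simpa

lemma iff16 {m : ℕ} (σ : Equiv.Perm (Fin m)) (q : Equiv.Perm (Fin 4)) (x : Fin 4 → Fin m)
    (hx : Function.Injective x)
    (h : ∀ a b : Fin 4, a < b → (σ (x a) < σ (x b) ↔ q a < q b)) :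
    ∀ a b : Fin 4, σ (x a) < σ (x b) ↔ q a < q b := by
  intro a b
  rcases lt_trichotomy a b with hab | rfl | hab
  · exact h a b hab
  · simp
  · have h2 := h b a hab
    have hne : σ (x a) ≠ σ (x b) := fun e => (ne_of_gt hab) (hx (σ.injective e))
    have hqe : q a ≠ q b := fun e => (ne_of_gt hab) (q.injective e)
    constructor
    · intro hlt
      have hn : ¬ q b < q a := fun hq => asymm hlt (h2.mpr hq)
      exact (Ne.lt_or_gt hqe).resolve_right hn
    · intro hlt
      have hn : ¬ σ (x b) < σ (x a) := fun hq => asymm hlt (h2.mp hq)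
      exact (Ne.lt_or_gt hne).resolve_right hn

lemma cond_of_avoids {m : ℕ} (σ : Equiv.Perm (Fin m))
    (h1 : Avoids σ q1) (h2 : Avoids σ q2) (h3 : Avoids σ q3) (h4 : Avoids σ q4) :
    Cond σ := by
  intro k0 k1 k2 k3 hk12 hk23 hv13 hv32 hv20
  -- values: σ k1 < σ k3 < σ k2 < σ k0
  have V13 : (σ k1).val < (σ k3).val := hv13
  have V32 : (σ k3).val < (σ k2).val := hv32
  have V20 : (σ k2).val < (σ k0).val := hv20
  have hne1 : k0 ≠ k1 := fun e => by rw [e] at V20; omega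
  have hne2 : k0 ≠ k2 := fun e => by rw [e] at V20; omega
  have hne3 : k0 ≠ k3 := fun e => by rw [e] at V20; omega
  rcases lt_or_gt_of_ne hne1 with h01 | h10
  · -- k0 < k1 : pattern 4132
    refine h4 ⟨![k0, k1, k2, k3], strictMono4 h01 hk12 hk23, ?_⟩
    refine iff16 σ q4 _ (strictMono4 h01 hk12 hk23).injective ?_
    intro a b hab
    fin_cases a <;> fin_cases b <;>
      simp_all <;>
      first
        | exact iff_of_true (by rw [Fin.lt_def]; omega) (by decide)
        | exact iff_of_false (by rw [Fin.lt_def]; omega) (by decide)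
        | (rw [Fin.lt_def]; omega)
        | decide
  rcases lt_or_gt_of_ne hne2 with h02 | h20
  · -- k1 < k0 < k2 : pattern 1432
    refine h3 ⟨![k1, k0, k2, k3], strictMono4 h10 h02 hk23, ?_⟩
    refine iff16 σ q3 _ (strictMono4 h10 h02 hk23).injective ?_
    intro a b hab
    fin_cases a <;> fin_cases b <;>
      simp_all <;>
      first
        | exact iff_of_true (by rw [Fin.lt_def]; omega) (by decide)
        | exact iff_of_false (by rw [Fin.lt_def]; omega) (by decide)
        | (rw [Fin.lt_def]; omega)
        | decide
  rcases lt_or_gt_of_ne hne3 with h03 | h30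
  · -- k2 < k0 < k3 : pattern 1342
    refine h2 ⟨![k1, k2, k0, k3], strictMono4 hk12 h20 h03, ?_⟩
    refine iff16 σ q2 _ (strictMono4 hk12 h20 h03).injective ?_
    intro a b hab
    fin_cases a <;> fin_cases b <;>
      simp_all <;>
      first
        | exact iff_of_true (by rw [Fin.lt_def]; omega) (by decide)
        | exact iff_of_false (by rw [Fin.lt_def]; omega) (by decide)
        | (rw [Fin.lt_def]; omega)
        | decide
  · -- k3 < k0 : pattern 1324
    refine h1 ⟨![k1, k2, k3, k0], strictMono4 hk12 hk23 h30, ?_⟩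
    refine iff16 σ q1 _ (strictMono4 hk12 hk23 h30).injective ?_
    intro a b hab
    fin_cases a <;> fin_cases b <;>
      simp_all <;>
      first
        | exact iff_of_true (by rw [Fin.lt_def]; omega) (by decide)
        | exact iff_of_false (by rw [Fin.lt_def]; omega) (by decide)
        | (rw [Fin.lt_def]; omega)
        | decide

end IMaux

namespace IMaux

variable {N : ℕ}

def P (τ : Equiv.Perm (Fin (N+1))) : ℕ := (τ.symm (Fin.last N)).val

lemma P_le (τ : Equiv.Perm (Fin (N+1))) : P τ ≤ N :=
  Nat.lt_succ_iff.mp (τ.symm (Fin.last N)).isLt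

lemma tau_P (τ : Equiv.Perm (Fin (N+1))) :
    (τ ⟨P τ, Nat.lt_succ_of_le (P_le τ)⟩).val = N := by
  have h : (⟨P τ, Nat.lt_succ_of_le (P_le τ)⟩ : Fin (N+1)) = τ.symm (Fin.last N) := rfl
  rw [h, Equiv.apply_symm_apply]
  rfl

lemma tau_le (τ : Equiv.Perm (Fin (N+1))) (x : Fin (N+1)) : (τ x).val ≤ N :=
  Nat.lt_succ_iff.mp (τ x).isLt

lemma tau_eq_iff (τ : Equiv.Perm (Fin (N+1))) (x : Fin (N+1)) :
    (τ x).val = N ↔ x.val = P τ := by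
  constructor
  · intro h
    have h2 : τ x = Fin.last N := Fin.ext h
    have h3 := congrArg (fun z => (τ.symm z).val) h2
    simpa [P] using h3
  · intro h
    have h2 : x = ⟨P τ, Nat.lt_succ_of_le (P_le τ)⟩ := Fin.ext h
    rw [h2]
    exact tau_P τ

lemma tau_inj_val (τ : Equiv.Perm (Fin (N+1))) {a b : Fin (N+1)}
    (h : (τ a).val = (τ b).val) : a.val = b.val :=
  congrArg Fin.val (τ.injective (Fin.ext h))

def g (τ : Equiv.Perm (Fin (N+1))) (q : Fin (N+2)) : Fin (N+2) :=
  if q.val = P τ + 1 then Fin.last (N+1)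
  else if h2 : q.val = N + 1 then ⟨N, by omega⟩
  else if q.val = P τ then
    (if h : P τ + 1 ≤ N then (τ ⟨P τ + 1, by omega⟩).castSucc else ⟨N, by omega⟩)
  else (τ ⟨q.val, by have := q.isLt; omega⟩).castSucc

def psi' (τ : Equiv.Perm (Fin (N+1))) (x : Fin (N+2)) : Fin (N+1) :=
  if h : P τ + 1 ≤ N ∧ x.val = P τ then ⟨P τ + 1, by omega⟩
  else ⟨min x.val N, by omega⟩

def psiF (τ : Equiv.Perm (Fin (N+1))) (x : Fin (N+1)) : Fin (N+2) :=
  if x.val = P τ + 1 then ⟨P τ, by have := P_le τ; omega⟩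
  else ⟨x.val, by have := x.isLt; omega⟩

lemma g_psucc (τ : Equiv.Perm (Fin (N+1))) (q : Fin (N+2)) (hq : q.val = P τ + 1) :
    (g τ q).val = N + 1 := by
  simp [g, hq]

lemma g_top (τ : Equiv.Perm (Fin (N+1))) (q : Fin (N+2)) (hq : q.val = N + 1)
    (hP : P τ ≠ N) : (g τ q).val = N := by
  have := P_le τ
  rw [g, if_neg (by omega), dif_pos hq]

lemma g_psi' (τ : Equiv.Perm (Fin (N+1))) (x : Fin (N+2)) (hx : x.val ≤ N)
    (hx2 : x.val ≠ P τ + 1) : (g τ x).val = (τ (psi' τ x)).val := by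
  have hPle := P_le τ
  by_cases hp : x.val = P τ
  · by_cases hN : P τ + 1 ≤ N
    · rw [g, if_neg hx2, dif_neg (by omega), if_pos hp, dif_pos hN,
        psi', dif_pos ⟨hN, hp⟩]
      simp
    · have hPN : P τ = N := by omega
      rw [g, if_neg hx2, dif_neg (by omega), if_pos hp, dif_neg hN,
        psi', dif_neg (by omega)]
      have : (⟨min x.val N, by omega⟩ : Fin (N+1)) = ⟨P τ, by omega⟩ := by
        apply Fin.ext; simp; omega
      rw [this, tau_P τ]
  · rw [g, if_neg hx2, dif_neg (by omega), if_neg hp, psi', dif_neg (by omega)]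
    have : (⟨min x.val N, by omega⟩ : Fin (N+1)) = ⟨x.val, by omega⟩ := by
      apply Fin.ext; simp; omega
    rw [this]
    simp

lemma g_le (τ : Equiv.Perm (Fin (N+1))) (q : Fin (N+2)) (hq : q.val ≠ P τ + 1) :
    (g τ q).val ≤ N := by
  have := P_le τ
  by_cases h : q.val = N + 1
  · rw [g_top τ q h (by omega)]
  · have : q.val ≤ N := by have := q.isLt; omega
    rw [g_psi' τ q this hq]
    exact tau_le τ _

lemma psi'_lt (τ : Equiv.Perm (Fin (N+1))) {x y : Fin (N+2)} (hx : x.val ≤ N)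
    (hy : y.val ≤ N) (hx2 : x.val ≠ P τ + 1) (hy2 : y.val ≠ P τ + 1)
    (hxy : x.val < y.val) : (psi' τ x).val < (psi' τ y).val := by
  rw [psi', psi']
  split_ifs <;> simp <;> omega

lemma psi'_ne_P (τ : Equiv.Perm (Fin (N+1))) (x : Fin (N+2)) (hx : x.val < N) :
    (psi' τ x).val ≠ P τ := by
  rw [psi']
  split_ifs with h <;> simp <;> omega

lemma psi'_psiF (τ : Equiv.Perm (Fin (N+1))) (x : Fin (N+1)) (hx : x.val ≠ P τ) :
    (psiF τ x).val ≤ N ∧ (psiF τ x).val ≠ P τ + 1 ∧ psi' τ (psiF τ x) = x := by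
  have hPle := P_le τ
  have hxlt := x.isLt
  by_cases h : x.val = P τ + 1
  · refine ⟨by rw [psiF, if_pos h]; simpa using hPle, by rw [psiF, if_pos h]; simp, ?_⟩
    rw [psiF, if_pos h, psi', dif_pos ⟨by omega, by simp⟩]
    apply Fin.ext; simp; omega
  · refine ⟨by rw [psiF, if_neg h]; simp; omega, by rw [psiF, if_neg h]; simpa using h, ?_⟩
    rw [psiF, if_neg h, psi', dif_neg (by simp; omega)]
    apply Fin.ext; simp; omega

lemma psiF_psi' (τ : Equiv.Perm (Fin (N+1))) (x : Fin (N+2)) (hx : x.val ≤ N)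
    (h2 : x.val ≠ P τ + 1) : psiF τ (psi' τ x) = x := by
  have hPle := P_le τ
  by_cases h : P τ + 1 ≤ N ∧ x.val = P τ
  · rw [psi', dif_pos h, psiF, if_pos (by simp)]
    apply Fin.ext; simp; omega
  · rw [psi', dif_neg h, psiF, if_neg (by simp; omega)]
    apply Fin.ext; simp; omega

end IMaux

namespace IMaux

variable {N : ℕ}

lemma psi'_inj (τ : Equiv.Perm (Fin (N+1))) {x y : Fin (N+2)} (hx : x.val ≤ N)
    (hy : y.val ≤ N) (hx2 : x.val ≠ P τ + 1) (hy2 : y.val ≠ P τ + 1)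
    (h : psi' τ x = psi' τ y) : x = y := by
  rcases Nat.lt_trichotomy x.val y.val with hlt | heq | hgt
  · exact absurd (congrArg Fin.val h) (Nat.ne_of_lt (psi'_lt τ hx hy hx2 hy2 hlt))
  · exact Fin.ext heq
  · exact absurd (congrArg Fin.val h).symm (Nat.ne_of_lt (psi'_lt τ hy hx hy2 hx2 hgt))

lemma g_inj (τ : Equiv.Perm (Fin (N+1))) : Function.Injective (g τ) := by
  intro x y hxy
  have hPle := P_le τ
  have hval := congrArg Fin.val hxy
  by_cases hx : x.val = P τ + 1
  · by_cases hy : y.val = P τ + 1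
    · exact Fin.ext (hx.trans hy.symm)
    · rw [g_psucc τ x hx] at hval
      have := g_le τ y hy
      omega
  · by_cases hy : y.val = P τ + 1
    · rw [g_psucc τ y hy] at hval
      have := g_le τ x hx
      omega
    · by_cases hx1 : x.val = N + 1
      · by_cases hy1 : y.val = N + 1
        · exact Fin.ext (hx1.trans hy1.symm)
        · have hPN : P τ ≠ N := by omega
          rw [g_top τ x hx1 hPN, g_psi' τ y (by have := y.isLt; omega) hy] at hval
          have : (psi' τ y).val = P τ := by
            have := (tau_eq_iff τ (psi' τ y)).mp hval.symm
            exact this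
          exfalso
          rw [psi'] at this
          split_ifs at this with h <;> simp at this <;> omega
      · by_cases hy1 : y.val = N + 1
        · have hPN : P τ ≠ N := by omega
          rw [g_top τ y hy1 hPN, g_psi' τ x (by have := x.isLt; omega) hx] at hval
          have : (psi' τ x).val = P τ := (tau_eq_iff τ (psi' τ x)).mp hval
          exfalso
          rw [psi'] at this
          split_ifs at this with h <;> simp at this <;> omega
        · have hx' : x.val ≤ N := by have := x.isLt; omega
          have hy' : y.val ≤ N := by have := y.isLt; omega
          rw [g_psi' τ x hx' hx, g_psi' τ y hy' hy] at hval
          exact psi'_inj τ hx' hy' hx hy (Fin.ext (tau_inj_val τ hval))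

noncomputable def Phi (τ : Equiv.Perm (Fin (N+1))) : Equiv.Perm (Fin (N+2)) :=
  Equiv.ofBijective (g τ) (Finite.injective_iff_bijective.mp (g_inj τ))

lemma Phi_apply (τ : Equiv.Perm (Fin (N+1))) (q : Fin (N+2)) : Phi τ q = g τ q := rfl

lemma Phi_injective : Function.Injective (Phi : Equiv.Perm (Fin (N+1)) → Equiv.Perm (Fin (N+2))) := by
  intro τ τ' h
  have hPle := P_le τ
  have hPle' := P_le τ'
  have hg : ∀ q, g τ q = g τ' q := fun q => by
    rw [← Phi_apply, ← Phi_apply, h]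
  -- first, P τ = P τ'
  have hPP : P τ = P τ' := by
    have h1 := congrArg Fin.val (hg ⟨P τ + 1, by omega⟩)
    rw [g_psucc τ _ rfl] at h1
    by_contra hne
    by_cases hc : P τ + 1 = P τ' + 1
    · omega
    · have := g_le τ' ⟨P τ + 1, by omega⟩ (by simpa using hc)
      omega
  apply Equiv.ext
  intro x
  apply Fin.ext
  by_cases hxP : x.val = P τ
  · have e1 := (tau_eq_iff τ x).mpr hxP
    have e2 := (tau_eq_iff τ' x).mpr (show x.val = P τ' by omega)
    omega
  · set xh : Fin (N+2) := if x.val = P τ + 1 then ⟨P τ, by omega⟩ else ⟨x.val, by have := x.isLt; omega⟩ with hxh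
    have hle : xh.val ≤ N := by
      rw [hxh]; split_ifs
      · exact hPle
      · exact Nat.lt_succ_iff.mp x.isLt
    have hne : xh.val ≠ P τ + 1 := by
      rw [hxh]; split_ifs with hc
      · show P τ ≠ P τ + 1; omega
      · exact hc
    have hpsi : psi' τ xh = x := by
      rw [hxh]
      split_ifs with hc
      · rw [psi', dif_pos ⟨by have := x.isLt; omega, by simp⟩]
        apply Fin.ext; simp; omega
      · rw [psi', dif_neg (by simp; omega)]
        apply Fin.ext; simp
        have := x.isLt; omega
    have hpsi' : psi' τ' xh = x := by
      rw [hxh]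
      split_ifs with hc
      · rw [psi', dif_pos ⟨by have := x.isLt; omega, by simp; omega⟩]
        apply Fin.ext; simp; omega
      · rw [psi', dif_neg (by simp; omega)]
        apply Fin.ext; simp
        have := x.isLt; omega
    have e1 := g_psi' τ xh hle hne
    have e2 := g_psi' τ' xh hle (by omega)
    rw [hpsi] at e1
    rw [hpsi'] at e2
    rw [← e1, ← e2, hg]

end IMaux

namespace IMaux

variable {N : ℕ}

lemma cond_Phi (τ : Equiv.Perm (Fin (N+1))) (hc : Cond τ) : Cond (Phi τ) := by
  intro k0 k1 k2 k3 h12 h23 v13 v32 v20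
  have hPle := P_le τ
  have H12 : k1.val < k2.val := h12
  have H23 : k2.val < k3.val := h23
  have W13 : (g τ k1).val < (g τ k3).val := v13
  have W32 : (g τ k3).val < (g τ k2).val := v32
  have W20 : (g τ k2).val < (g τ k0).val := v20
  have lt0 := (g τ k0).isLt
  have hk2 : k2.val ≠ P τ + 1 := fun h => by rw [g_psucc τ k2 h] at W20; omega
  have hk3 : k3.val ≠ P τ + 1 := fun h => by
    rw [g_psucc τ k3 h] at W32; have := (g τ k2).isLt; omega
  have hk1 : k1.val ≠ P τ + 1 := fun h => by
    rw [g_psucc τ k1 h] at W13; have := (g τ k3).isLt; omega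
  have hk3N : k3.val ≠ N + 1 := by
    intro e
    by_cases hPN : P τ = N
    · exact hk3 (by omega)
    · rw [g_top τ k3 e hPN] at W32
      have := g_le τ k2 hk2
      omega
  have hk3le : k3.val ≤ N := by have := k3.isLt; omega
  have hk2le : k2.val ≤ N := by omega
  have hk1le : k1.val ≤ N := by omega
  have e1 := g_psi' τ k1 hk1le hk1
  have e2 := g_psi' τ k2 hk2le hk2
  have e3 := g_psi' τ k3 hk3le hk3
  have hne : (psi' τ k2).val ≠ P τ := psi'_ne_P τ k2 (by omega)
  have htop : (τ (psi' τ k2)).val ≠ N := fun e => hne ((tau_eq_iff τ _).mp e)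
  have hle2 := tau_le τ (psi' τ k2)
  refine hc ⟨P τ, by omega⟩ (psi' τ k1) (psi' τ k2) (psi' τ k3) ?_ ?_ ?_ ?_ ?_
  · exact psi'_lt τ hk1le hk2le hk1 hk2 H12
  · exact psi'_lt τ hk2le hk3le hk2 hk3 H23
  · show (τ (psi' τ k1)).val < (τ (psi' τ k3)).val; omega
  · show (τ (psi' τ k3)).val < (τ (psi' τ k2)).val; omega
  · show (τ (psi' τ k2)).val < (τ ⟨P τ, by omega⟩).val
    rw [tau_P τ]; omega

def Fmap (τ : Equiv.Perm (Fin (N+1))) (ab : Fin (N+1) × Fin (N+1)) :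
    Fin (N+2) × Fin (N+2) :=
  if ab.1.val = P τ then
    (⟨P τ + 1, by have := P_le τ; omega⟩, ⟨ab.2.val + 1, by have := ab.2.isLt; omega⟩)
  else (psiF τ ab.1, psiF τ ab.2)

def Gmap (τ : Equiv.Perm (Fin (N+1))) (ij : Fin (N+2) × Fin (N+2)) :
    Fin (N+1) × Fin (N+1) :=
  if ij.1.val = P τ + 1 then
    (⟨P τ, by have := P_le τ; omega⟩, ⟨ij.2.val - 1, by have := ij.2.isLt; omega⟩)
  else (psi' τ ij.1, psi' τ ij.2)

lemma invCount_Phi (τ : Equiv.Perm (Fin (N+1))) : invCount (Phi τ) = invCount τ := by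
  have hPle := P_le τ
  rw [invCount_eq, invCount_eq]
  refine Finset.card_nbij' (Gmap τ) (Fmap τ) ?_ ?_ ?_ ?_
  · -- Gmap maps Phi-inversions to τ-inversions
    rintro ⟨i, j⟩ hm
    simp only [Finset.mem_coe, mem_filter, mem_univ, true_and] at hm ⊢
    obtain ⟨hij, hinv⟩ := hm
    have Hij : i.val < j.val := hij
    have Hinv : (g τ j).val < (g τ i).val := hinv
    by_cases hi : i.val = P τ + 1
    · rw [Gmap, if_pos hi]
      refine ⟨show P τ < j.val - 1 by omega, ?_⟩
      set jj : Fin (N+1) := ⟨j.val - 1, by have := j.isLt; omega⟩ with hjj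
      have h1 : jj.val ≠ P τ := by show j.val - 1 ≠ P τ; omega
      have h2 : (τ jj).val ≠ N := fun e => h1 ((tau_eq_iff τ jj).mp e)
      have h3 := tau_le τ jj
      show (τ jj).val < (τ ⟨P τ, by omega⟩).val
      rw [tau_P τ]; omega
    · have hj : j.val ≠ P τ + 1 := fun e => by
        rw [g_psucc τ j e] at Hinv; have := (g τ i).isLt; omega
      have hjN : j.val ≠ N + 1 := by
        intro e
        by_cases hPN : P τ = N
        · exact hj (by omega)
        · rw [g_top τ j e hPN] at Hinv
          have := g_le τ i hi
          omega
      have hjle : j.val ≤ N := by have := j.isLt; omega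
      have hile : i.val ≤ N := by omega
      rw [Gmap, if_neg hi]
      refine ⟨psi'_lt τ hile hjle hi hj Hij, ?_⟩
      have e1 := g_psi' τ i hile hi
      have e2 := g_psi' τ j hjle hj
      show (τ (psi' τ j)).val < (τ (psi' τ i)).val
      omega
  · -- Fmap maps τ-inversions to Phi-inversions
    rintro ⟨a, b⟩ hm
    simp only [Finset.mem_coe, mem_filter, mem_univ, true_and] at hm ⊢
    obtain ⟨hab, hv⟩ := hm
    have Hab : a.val < b.val := hab
    have Hv : (τ b).val < (τ a).val := hv
    have hbP : b.val ≠ P τ := fun e => by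
      have h1 := (tau_eq_iff τ b).mpr e
      have h2 := tau_le τ a
      omega
    by_cases ha : a.val = P τ
    · rw [Fmap, if_pos ha]
      have hble := b.isLt
      refine ⟨show P τ + 1 < b.val + 1 by omega, ?_⟩
      show (g τ (⟨b.val + 1, by omega⟩ : Fin (N+2))).val <
        (g τ (⟨P τ + 1, by omega⟩ : Fin (N+2))).val
      rw [g_psucc τ ⟨P τ + 1, by omega⟩ rfl]
      exact Nat.lt_succ_of_le
        (g_le τ ⟨b.val + 1, by omega⟩ (show b.val + 1 ≠ P τ + 1 by omega))
    · rw [Fmap, if_neg ha]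
      obtain ⟨h1a, h2a, h3a⟩ := psi'_psiF τ a ha
      obtain ⟨h1b, h2b, h3b⟩ := psi'_psiF τ b hbP
      have ea := g_psi' τ (psiF τ a) h1a h2a
      have eb := g_psi' τ (psiF τ b) h1b h2b
      rw [h3a] at ea
      rw [h3b] at eb
      constructor
      · rcases Nat.lt_trichotomy (psiF τ a).val (psiF τ b).val with h | h | h
        · exact h
        · exfalso
          have : psiF τ a = psiF τ b := Fin.ext h
          have : psi' τ (psiF τ a) = psi' τ (psiF τ b) := by rw [this]
          rw [h3a, h3b] at this
          have := congrArg Fin.val this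
          omega
        · exfalso
          have := psi'_lt τ h1b h1a h2b h2a h
          rw [congrArg Fin.val h3a, congrArg Fin.val h3b] at this
          omega
      · show (g τ (psiF τ b)).val < (g τ (psiF τ a)).val
        omega
  · -- Gmap ∘ Fmap = id
    rintro ⟨i, j⟩ hm
    simp only [Finset.mem_coe, mem_filter, mem_univ, true_and] at hm
    obtain ⟨hij, hinv⟩ := hm
    have Hij : i.val < j.val := hij
    have Hinv : (g τ j).val < (g τ i).val := hinv
    by_cases hi : i.val = P τ + 1
    · rw [Gmap, if_pos hi, Fmap, if_pos rfl]
      simp only [Prod.mk.injEq]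
      constructor
      · apply Fin.ext; show P τ + 1 = i.val; omega
      · apply Fin.ext; show j.val - 1 + 1 = j.val; omega
    · have hj : j.val ≠ P τ + 1 := fun e => by
        rw [g_psucc τ j e] at Hinv; have := (g τ i).isLt; omega
      have hjN : j.val ≠ N + 1 := by
        intro e
        by_cases hPN : P τ = N
        · exact hj (by omega)
        · rw [g_top τ j e hPN] at Hinv
          have := g_le τ i hi
          omega
      have hjle : j.val ≤ N := by have := j.isLt; omega
      have hile : i.val ≤ N := by omega
      have hneP : (psi' τ i).val ≠ P τ := psi'_ne_P τ i (by omega)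
      rw [Gmap, if_neg hi, Fmap, if_neg hneP]
      simp only [Prod.mk.injEq]
      exact ⟨psiF_psi' τ i hile hi, psiF_psi' τ j hjle hj⟩
  · -- Fmap ∘ Gmap = id
    rintro ⟨a, b⟩ hm
    simp only [Finset.mem_coe, mem_filter, mem_univ, true_and] at hm
    obtain ⟨hab, hv⟩ := hm
    have Hab : a.val < b.val := hab
    have Hv : (τ b).val < (τ a).val := hv
    have hbP : b.val ≠ P τ := fun e => by
      have h1 := (tau_eq_iff τ b).mpr e
      have h2 := tau_le τ a
      omega
    by_cases ha : a.val = P τ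
    · rw [Fmap, if_pos ha, Gmap, if_pos rfl]
      simp only [Prod.mk.injEq]
      constructor
      · apply Fin.ext; show P τ = a.val; omega
      · apply Fin.ext; show b.val + 1 - 1 = b.val; omega
    · rw [Fmap, if_neg ha]
      obtain ⟨h1a, h2a, h3a⟩ := psi'_psiF τ a ha
      rw [Gmap, if_neg (by simpa using h2a)]
      obtain ⟨h1b, h2b, h3b⟩ := psi'_psiF τ b hbP
      simp only [Prod.mk.injEq]
      exact ⟨h3a, h3b⟩

end IMaux

namespace IMaux

lemma key_iff {m k : ℕ} (π : Equiv.Perm (Fin m)) :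
    (invCount π = k ∧ Avoids π p1324 ∧ Avoids π p2314 ∧ Avoids π p3214 ∧ Avoids π p4213)
    ↔ (invCount (M π) = k ∧ Cond (M π)) := by
  have h1 : Avoids π p1324 ↔ Avoids (M π) q1 := by rw [avoids_M_iff π p1324, M_p1324]
  have h2 : Avoids π p2314 ↔ Avoids (M π) q2 := by rw [avoids_M_iff π p2314, M_p2314]
  have h3 : Avoids π p3214 ↔ Avoids (M π) q3 := by rw [avoids_M_iff π p3214, M_p3214]
  have h4 : Avoids π p4213 ↔ Avoids (M π) q4 := by rw [avoids_M_iff π p4213, M_p4213]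
  rw [invCount_M]
  constructor
  · rintro ⟨hk, a1, a2, a3, a4⟩
    exact ⟨hk, cond_of_avoids _ (h1.mp a1) (h2.mp a2) (h3.mp a3) (h4.mp a4)⟩
  · rintro ⟨hk, hcond⟩
    obtain ⟨a1, a2, a3, a4⟩ := avoids_of_cond _ hcond
    exact ⟨hk, h1.mpr a1, h2.mpr a2, h3.mpr a3, h4.mpr a4⟩

noncomputable def E (m k : ℕ) :
    {π : Equiv.Perm (Fin m) // invCount π = k ∧ Avoids π p1324 ∧ Avoids π p2314 ∧
      Avoids π p3214 ∧ Avoids π p4213} ≃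
    {σ : Equiv.Perm (Fin m) // invCount σ = k ∧ Cond σ} where
  toFun x := ⟨M x.1, (key_iff x.1).mp x.2⟩
  invFun y := ⟨M y.1, by
    have := (key_iff (k := k) (M y.1))
    rw [M_M] at this
    exact this.mpr y.2⟩
  left_inv x := Subtype.ext (M_M x.1)
  right_inv y := Subtype.ext (M_M y.1)

end IMaux


/-- The set {1324, 2314, 3214, 4213} is inversion monotone: for every `n ≥ 1` and `k ≥ 0`,
the number of permutations of length `n` with `k` inversions avoiding all four patterns
is at most the corresponding number for length `n+1`. -/
theorem inversion_monotone_1324_2314_3214_4213 (n k : ℕ) (hn : 1 ≤ n) :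
    Nat.card {π : Equiv.Perm (Fin n) // invCount π = k ∧
      Avoids π p1324 ∧ Avoids π p2314 ∧ Avoids π p3214 ∧ Avoids π p4213} ≤
    Nat.card {π : Equiv.Perm (Fin (n + 1)) // invCount π = k ∧
      Avoids π p1324 ∧ Avoids π p2314 ∧ Avoids π p3214 ∧ Avoids π p4213} := by
  obtain ⟨N, rfl⟩ : ∃ N, n = N + 1 := ⟨n - 1, by omega⟩
  rw [Nat.card_congr (IMaux.E (N+1) k), Nat.card_congr (IMaux.E (N+2) k)]
  refine Nat.card_le_card_of_injective
    (fun x => ⟨IMaux.Phi x.1, by rw [IMaux.invCount_Phi]; exact x.2.1,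
      IMaux.cond_Phi x.1 x.2.2⟩) ?_
  intro x y h
  exact Subtype.ext (IMaux.Phi_injective (congrArg Subtype.val h))
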